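/- Let f : ℝ → ℝ be continuous and 1-periodic, and let p = (a,b) ∈ ℝ² with b ≠ 0. Set M = |b| + max_{y∈[0,1]} b·f(y). If |a| ≤ ∫₀¹ √((M − b f(y))² − b²) dy, then the constant H̄ = M satisfies: there exists a Lipschitz 1-periodic function v : ℝ → ℝ with √((a + v'(y))² + b²) + b f(y) = H̄ for almost every y. -/

import Mathlib

open MeasureTheory Set intervalIntegral

theorem shear_cell_problem_small_a (f : ℝ → ℝ) (hf : Continuous f)
    (hper : Function.Periodic f 1) (a b : ℝ) (hb : b ≠ 0)
    (M : ℝ) (hM : M = |b| + sSup ((fun y => b * f y) '' Set.Icc 0 1))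
    (ha : |a| ≤ ∫ y in (0:ℝ)..1, Real.sqrt ((M - b * f y) ^ 2 - b ^ 2)) :
    ∃ (v v' : ℝ → ℝ) (L : NNReal),
      LipschitzWith L v ∧ Function.Periodic v 1 ∧
      ∀ᵐ y : ℝ, HasDerivAt v (v' y) y ∧
        Real.sqrt ((a + v' y) ^ 2 + b ^ 2) + b * f y = M := by
  -- helper: periodic functions agree with their fract-value
  have hfract : ∀ (F : ℝ → ℝ), Function.Periodic F 1 → ∀ y : ℝ, F (Int.fract y) = F y := by
    intro F hF y
    have h := hF.sub_int_mul_eq (x := y) ⌊y⌋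
    rw [mul_one] at h
    rw [← Int.self_sub_floor]
    exact h
  set g : ℝ → ℝ := fun y => Real.sqrt ((M - b * f y) ^ 2 - b ^ 2) with hg
  have hgc : Continuous g :=
    (((continuous_const.sub (continuous_const.mul hf)).pow 2).sub continuous_const).sqrt
  have hgper : Function.Periodic g 1 := fun y => by simp [hg, hper y]
  -- bound on b * f
  have hbf : ∀ y, b * f y ≤ M - |b| := by
    intro y
    have hbdd : BddAbove ((fun y => b * f y) '' Icc (0:ℝ) 1) :=
      (isCompact_Icc.image (continuous_const.mul hf)).bddAbove
    have hmem : Int.fract y ∈ Icc (0:ℝ) 1 := ⟨Int.fract_nonneg y, (Int.fract_lt_one y).le⟩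
    have h1 : b * f (Int.fract y) ≤ sSup ((fun y => b * f y) '' Icc (0:ℝ) 1) :=
      le_csSup hbdd ⟨Int.fract y, hmem, rfl⟩
    have h2 : b * f (Int.fract y) = b * f y := by
      rw [hfract f hper y]
    rw [h2] at h1
    linarith [hM.ge]
  have hMb : ∀ y, |b| ≤ M - b * f y := fun y => by linarith [hbf y]
  have hnn : ∀ y, 0 ≤ (M - b * f y) ^ 2 - b ^ 2 := by
    intro y
    have h1 := hMb y
    have h2 : b ^ 2 = |b| ^ 2 := (sq_abs b).symm
    nlinarith [abs_nonneg b]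
  have hgsq : ∀ y, g y ^ 2 = (M - b * f y) ^ 2 - b ^ 2 := fun y => Real.sq_sqrt (hnn y)
  have hgnn : ∀ y, 0 ≤ g y := fun y => Real.sqrt_nonneg _
  -- max of g
  obtain ⟨ym, -, hym⟩ := isCompact_Icc.exists_isMaxOn (Set.nonempty_Icc.mpr zero_le_one)
    hgc.continuousOn
  set Cg : ℝ := g ym with hCgdef
  have hCg : ∀ y, g y ≤ Cg := by
    intro y
    have h2 : g (Int.fract y) ≤ Cg := hym ⟨Int.fract_nonneg y, (Int.fract_lt_one y).le⟩
    rwa [hfract g hgper y] at h2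
  have hCgnn : 0 ≤ Cg := le_trans (hgnn 0) (by
    have := hym (show (0:ℝ) ∈ Icc (0:ℝ) 1 by simp)
    simpa using this)
  -- the primitive of g and the IVT
  set G : ℝ → ℝ := fun t => ∫ s in (0:ℝ)..t, g s with hGdef
  set I : ℝ := ∫ y in (0:ℝ)..1, g y with hIdef
  have haI : |a| ≤ I := ha
  have hGcont : Continuous G :=
    intervalIntegral.continuous_primitive (fun c d => hgc.intervalIntegrable c d) 0
  have hmemIcc : (I + a) / 2 ∈ Icc (G 0) (G 1) := by
    have h0 : G 0 = 0 := intervalIntegral.integral_same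
    have h1 : G 1 = I := rfl
    rw [h0, h1]
    obtain ⟨hl, hr⟩ := abs_le.mp haI
    constructor <;> [linarith; linarith]
  obtain ⟨τ, hτmem, hτ⟩ := intermediate_value_Icc zero_le_one hGcont.continuousOn hmemIcc
  -- the sign function and the corrector derivative
  set s : ℝ → ℝ := fun y => if Int.fract y < τ then 1 else -1 with hs
  set w : ℝ → ℝ := fun y => -a + s y * g y with hw
  set v : ℝ → ℝ := fun y => ∫ t in (0:ℝ)..y, w t with hv
  have hsmeas : Measurable s :=
    Measurable.ite (measurableSet_lt measurable_fract measurable_const)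
      measurable_const measurable_const
  have hsgmeas : Measurable (fun y => s y * g y) := hsmeas.mul hgc.measurable
  have hwmeas : Measurable w := measurable_const.add hsgmeas
  have hsabs : ∀ y, |s y| = 1 := by
    intro y
    by_cases h : Int.fract y < τ <;> simp [hs, h]
  have hsgabs : ∀ y, |s y * g y| = g y := by
    intro y
    rw [abs_mul, hsabs, one_mul, abs_of_nonneg (hgnn y)]
  have hwbd : ∀ y, |w y| ≤ |a| + Cg := by
    intro y
    calc |w y| ≤ |(-a)| + |s y * g y| := abs_add_le _ _
      _ = |a| + g y := by rw [abs_neg, hsgabs]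
      _ ≤ |a| + Cg := by linarith [hCg y]
  have hbdint : ∀ (u : ℝ → ℝ), Measurable u → (∀ y, |u y| ≤ |a| + Cg) →
      ∀ c d : ℝ, IntervalIntegrable u volume c d := by
    intro u hu hub c d
    rw [intervalIntegrable_iff]
    apply Measure.integrableOn_of_bounded (M := |a| + Cg)
    · rw [Set.uIoc]; exact measure_Ioc_lt_top.ne
    · exact hu.aestronglyMeasurable
    · exact Filter.Eventually.of_forall fun y => by simpa [Real.norm_eq_abs] using hub y
  have hwint : ∀ c d : ℝ, IntervalIntegrable w volume c d := hbdint w hwmeas hwbd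
  have hsgint : ∀ c d : ℝ, IntervalIntegrable (fun y => s y * g y) volume c d := by
    apply hbdint _ hsgmeas
    intro y
    rw [hsgabs]
    linarith [hCg y, abs_nonneg a]
  -- a.e. non-membership in the bad countable set
  have hNE : ∀ᵐ y : ℝ, y ≠ τ := by
    have : (volume ({τ} : Set ℝ)) = 0 := measure_singleton τ
    rw [measure_eq_zero_iff_ae_notMem] at this
    filter_upwards [this] with y hy
    simpa using hy
  -- computation of the integral of s*g over [0,1]
  have hint1 : (∫ y in (0:ℝ)..τ, s y * g y) = G τ := by
    apply intervalIntegral.integral_congr_ae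
    filter_upwards [hNE] with y hy hymem
    rw [Set.uIoc_of_le hτmem.1] at hymem
    have hyτ : y < τ := lt_of_le_of_ne hymem.2 hy
    have hfr : Int.fract y = y := Int.fract_eq_self.mpr ⟨hymem.1.le, lt_of_lt_of_le hyτ hτmem.2⟩
    have : s y = 1 := by simp [hs, hfr, hyτ]
    rw [this, one_mul]
  have hint2 : (∫ y in τ..1, s y * g y) = -(∫ y in τ..1, g y) := by
    rw [← intervalIntegral.integral_neg]
    apply intervalIntegral.integral_congr_ae
    have hNE1 : ∀ᵐ y : ℝ, y ≠ 1 := by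
      have : (volume ({(1:ℝ)} : Set ℝ)) = 0 := measure_singleton 1
      rw [measure_eq_zero_iff_ae_notMem] at this
      filter_upwards [this] with y hy
      simpa using hy
    filter_upwards [hNE1] with y hy hymem
    rw [Set.uIoc_of_le hτmem.2] at hymem
    have hy1 : y < 1 := lt_of_le_of_ne hymem.2 hy
    have hfr : Int.fract y = y := Int.fract_eq_self.mpr ⟨le_trans hτmem.1 hymem.1.le, hy1⟩
    have hns : ¬ Int.fract y < τ := by rw [hfr]; exact not_lt.mpr hymem.1.le
    simp [hs, hns]
  have hGsum : G τ + (∫ y in τ..1, g y) = I :=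
    intervalIntegral.integral_add_adjacent_intervals (hgc.intervalIntegrable _ _)
      (hgc.intervalIntegrable _ _)
  have hS : (∫ y in (0:ℝ)..1, s y * g y) = a := by
    have hsum : (∫ y in (0:ℝ)..τ, s y * g y) + (∫ y in τ..1, s y * g y)
        = ∫ y in (0:ℝ)..1, s y * g y :=
      intervalIntegral.integral_add_adjacent_intervals (hsgint _ _) (hsgint _ _)
    rw [hint1, hint2] at hsum
    have hτval : G τ = (I + a) / 2 := hτ
    linarith
  have hw01 : (∫ y in (0:ℝ)..1, w y) = 0 := by
    have : (∫ y in (0:ℝ)..1, w y)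
        = (∫ _y in (0:ℝ)..1, (-a : ℝ)) + ∫ y in (0:ℝ)..1, s y * g y :=
      intervalIntegral.integral_add (intervalIntegrable_const) (hsgint _ _)
    rw [this, hS]
    simp
  -- periodicity
  have hsper : Function.Periodic s 1 := by
    intro y
    simp [hs, Int.fract_add_one]
  have hwper : Function.Periodic w 1 := by
    intro y
    simp only [hw]
    rw [hsper y, hgper y]
  have hvper : Function.Periodic v 1 := by
    intro y
    have h1 : (∫ t in (0:ℝ)..y, w t) + (∫ t in y..(y+1), w t) = ∫ t in (0:ℝ)..(y+1), w t :=
      intervalIntegral.integral_add_adjacent_intervals (hwint _ _) (hwint _ _)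
    have h2 : (∫ t in y..(y+1), w t) = ∫ t in (0:ℝ)..(0+1), w t :=
      hwper.intervalIntegral_add_eq y 0
    have h3 : (∫ t in (0:ℝ)..(0+1), w t) = 0 := by
      rw [zero_add]; exact hw01
    show (∫ t in (0:ℝ)..(y+1), w t) = ∫ t in (0:ℝ)..y, w t
    rw [← h1, h2, h3, add_zero]
  -- Lipschitz
  refine ⟨v, w, ⟨|a| + Cg, by positivity⟩, ?_, hvper, ?_⟩
  · apply LipschitzWith.of_dist_le_mul
    intro x y
    have h1 : (∫ t in (0:ℝ)..y, w t) + (∫ t in y..x, w t) = ∫ t in (0:ℝ)..x, w t :=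
      intervalIntegral.integral_add_adjacent_intervals (hwint _ _) (hwint _ _)
    have h2 : v x - v y = ∫ t in y..x, w t := by
      simp only [hv]; linarith
    rw [Real.dist_eq, Real.dist_eq, h2]
    have h3 := intervalIntegral.norm_integral_le_of_norm_le_const
      (C := |a| + Cg) (f := w) (a := y) (b := x)
      (fun t _ => by simpa [Real.norm_eq_abs] using hwbd t)
    show _ ≤ (|a| + Cg) * |x - y|
    simpa [Real.norm_eq_abs, NNReal.coe_mk, abs_sub_comm] using h3
  · -- a.e. derivative and the equation
    have hbad : ({y : ℝ | Int.fract y = 0 ∨ Int.fract y = τ} : Set ℝ).Countable := by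
      apply Set.Countable.mono _
        ((Set.countable_range (fun n : ℤ => (n : ℝ))).union
          (Set.countable_range fun n : ℤ => τ + n))
      rintro y (h | h)
      · left
        refine ⟨⌊y⌋, ?_⟩
        show ((⌊y⌋ : ℤ) : ℝ) = y
        have h2 := Int.fract_add_floor y
        rw [h] at h2
        linarith
      · right
        refine ⟨⌊y⌋, ?_⟩
        show τ + ((⌊y⌋ : ℤ) : ℝ) = y
        have h2 := Int.fract_add_floor y
        rw [h] at h2
        linarith
    have hbad0 : ∀ᵐ y : ℝ, Int.fract y ≠ 0 ∧ Int.fract y ≠ τ := by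
      have := hbad.measure_zero volume
      rw [measure_eq_zero_iff_ae_notMem] at this
      filter_upwards [this] with y hy
      exact ⟨fun h => hy (Or.inl h), fun h => hy (Or.inr h)⟩
    filter_upwards [hbad0] with y hy
    obtain ⟨hy0, hyτ⟩ := hy
    have hfc : ContinuousAt Int.fract y := by
      apply continuousAt_fract
      intro h
      exact hy0 (show y - ((⌊y⌋ : ℤ) : ℝ) = 0 from sub_eq_zero.mpr h)
    have hsc : ContinuousAt s y := by
      rcases lt_or_gt_of_ne hyτ with h | h
      · have hev : ∀ᶠ z in nhds y, s z = s y := by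
          filter_upwards [hfc.preimage_mem_nhds (Iio_mem_nhds h)] with z hz
          have hz' : Int.fract z < τ := hz
          simp only [hs]
          rw [if_pos hz', if_pos h]
        exact continuousAt_const.congr (hev.mono fun z hz => hz.symm)
      · have hev : ∀ᶠ z in nhds y, s z = s y := by
          filter_upwards [hfc.preimage_mem_nhds (Ioi_mem_nhds h)] with z hz
          have hz' : τ < Int.fract z := hz
          simp only [hs]
          rw [if_neg (not_lt.mpr hz'.le), if_neg (not_lt.mpr h.le)]
        exact continuousAt_const.congr (hev.mono fun z hz => hz.symm)
    have hwc : ContinuousAt w y := continuousAt_const.add (hsc.mul hgc.continuousAt)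
    have hd : HasDerivAt v (w y) y :=
      intervalIntegral.integral_hasDerivAt_right (hwint 0 y)
        ⟨Set.univ, Filter.univ_mem, hwmeas.aestronglyMeasurable.restrict⟩ hwc
    refine ⟨hd, ?_⟩
    have h1 : a + w y = s y * g y := by
      show a + (-a + s y * g y) = s y * g y
      ring
    have hsq1 : s y ^ 2 = 1 := by
      have := hsabs y
      nlinarith [sq_abs (s y)]
    have h2 : (a + w y) ^ 2 + b ^ 2 = (M - b * f y) ^ 2 := by
      rw [h1, mul_pow, hsq1, one_mul, hgsq]
      ring
    rw [h2, Real.sqrt_sq (by linarith [hMb y, abs_nonneg b])]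
    ring
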